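/- arXiv:2504.07672 — 2 statements merged into one kernel-verified Lean document; each statement's English description precedes it below -/
import Mathlib

section
/- Joint generating function of a split Skellam process: let S be a generalized Skellam process with jump set I ⊂ ℤ \ {0} and mean functions Λ_i, where each jump X of size i is split into sgn(X)Y and sgn(X)(|X|−Y) with Y having conditional law q(·; i) on {0,...,|i|}. Then the joint probability generating function of the two component processes is G_t(u,v) = exp(−Σ_{i∈I} Λ_i(t)(1 − E[u^{sgn(X)Y} v^{X − sgn(X)Y} | X = i])). -/
open MeasureTheory ProbabilityTheory Filter Finset
open scoped NNReal ENNReal Topology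

section Aux
variable {Ω : Type*} [MeasurableSpace Ω] {μ : Measure Ω}

lemma comp_nat_eq_tsum_indicator (Nf : Ω → ℕ) (g : ℕ → Ω → ℝ≥0∞) :
    (fun ω => g (Nf ω) ω) = fun ω => ∑' n, Set.indicator (Nf ⁻¹' {n}) (g n) ω := by
  funext ω
  rw [tsum_eq_single (Nf ω)]
  · rw [Set.indicator_of_mem (by simp : ω ∈ Nf ⁻¹' {Nf ω})]
  · intro n hn
    exact Set.indicator_of_notMem (by simp; exact fun h => hn h.symm) _

lemma measurable_comp_nat {m0 : MeasurableSpace Ω} (Nf : Ω → ℕ) (g : ℕ → Ω → ℝ≥0∞)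
    (hN : Measurable[m0] Nf) (hg : ∀ n, Measurable[m0] (g n)) :
    Measurable[m0] (fun ω => g (Nf ω) ω) := by
  rw [comp_nat_eq_tsum_indicator]
  exact Measurable.ennreal_tsum fun n => (hg n).indicator (hN (measurableSet_singleton n))

lemma zpow_finset_sum' {u : ℝ} (hu : u ≠ 0) {ι : Type*} (s : Finset ι) (f : ι → ℤ) :
    u ^ (∑ i ∈ s, f i) = ∏ i ∈ s, u ^ f i := by
  classical
  induction s using Finset.induction_on with
  | empty => simp
  | insert _ _ ha ih =>
    rename_i a s
    rw [Finset.sum_insert ha, Finset.prod_insert ha, zpow_add₀ hu, ih]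

end Aux

lemma aemeasurable_of_tsum_fiber_eq_one {Ω : Type*} [MeasurableSpace Ω] {μ : Measure Ω}
    [IsProbabilityMeasure μ] {f : Ω → ℕ} (h : ∑' j, μ {ω | f ω = j} = 1) :
    AEMeasurable f μ := by
  classical
  set A : ℕ → Set Ω := fun j => {ω | f ω = j} with hA
  set B : ℕ → Set Ω := fun j => toMeasurable μ (A j) with hB
  have hAB : ∀ j, A j ⊆ B j := fun j => subset_toMeasurable μ (A j)
  have hBmeas : ∀ j, MeasurableSet (B j) := fun j => measurableSet_toMeasurable μ (A j)
  have hμB : ∀ j, μ (B j) = μ (A j) := fun j => measure_toMeasurable (A j)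
  have hcoverA : (⋃ j, A j) = Set.univ := by
    ext ω; simp only [Set.mem_iUnion, Set.mem_univ, iff_true]
    exact ⟨f ω, rfl⟩
  have hcoverB : (⋃ j, B j) = Set.univ :=
    Set.eq_univ_of_univ_subset (hcoverA ▸ Set.iUnion_mono hAB)
  set C : ℕ → Set Ω := fun j => B j \ ⋃ (j' : ℕ) (_ : j' < j), B j' with hC
  have hCmeas : ∀ j, MeasurableSet (C j) := fun j =>
    (hBmeas j).diff (MeasurableSet.iUnion fun j' => MeasurableSet.iUnion fun _ => hBmeas j')
  have hCB : ∀ j, C j ⊆ B j := fun j => Set.diff_subset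
  have hCdisj : Pairwise (Function.onFun Disjoint C) := by
    intro a b hab
    wlog hlt : a < b generalizing a b
    · exact (this hab.symm (by omega)).symm
    refine Set.disjoint_left.mpr fun ω hωa hωb => ?_
    exact hωb.2 (Set.mem_iUnion.mpr ⟨a, Set.mem_iUnion.mpr ⟨hlt, hωa.1⟩⟩)
  have hcoverC : (⋃ j, C j) = Set.univ := by
    rw [Set.eq_univ_iff_forall]
    intro ω
    have hne : {j | ω ∈ B j}.Nonempty := by
      have : ω ∈ ⋃ j, B j := hcoverB ▸ Set.mem_univ ω
      obtain ⟨j, hj⟩ := Set.mem_iUnion.mp this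
      exact ⟨j, hj⟩
    refine Set.mem_iUnion.mpr ⟨sInf {j | ω ∈ B j}, Nat.sInf_mem hne, ?_⟩
    intro hmem
    obtain ⟨j', hj'⟩ := Set.mem_iUnion.mp hmem
    obtain ⟨hlt, hj'B⟩ := Set.mem_iUnion.mp hj'
    exact Nat.notMem_of_lt_sInf hlt hj'B
  have hsumC : ∑' j, μ (C j) = 1 := by
    rw [← measure_iUnion hCdisj hCmeas, hcoverC, measure_univ]
  have hsumB : ∑' j, μ (B j) = 1 := by
    calc ∑' j, μ (B j) = ∑' j, μ (A j) := by simp only [hμB]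
    _ = 1 := h
  have hCBeq : ∀ j, μ (C j) = μ (B j) := by
    by_contra hcon
    push_neg at hcon
    obtain ⟨j0, hj0⟩ := hcon
    have hlt : μ (C j0) < μ (B j0) := lt_of_le_of_ne (measure_mono (hCB j0)) hj0
    have : ∑' j, μ (C j) < ∑' j, μ (B j) :=
      ENNReal.tsum_lt_tsum (by rw [hsumC]; exact ENNReal.one_ne_top)
        (fun j => measure_mono (hCB j)) hlt
    rw [hsumC, hsumB] at this
    exact lt_irrefl _ this
  have hnull : ∀ j, μ (B j \ C j) = 0 := by
    intro j
    rw [measure_diff (hCB j) (hCmeas j).nullMeasurableSet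
      (by rw [hCBeq j]; exact (measure_lt_top μ _).ne), hCBeq j, tsub_self]
  set g : Ω → ℕ := fun ω => sInf {j | ω ∈ B j} with hg
  have hgC : ∀ ω n, g ω = n ↔ ω ∈ C n := by
    intro ω n
    have hne : {j | ω ∈ B j}.Nonempty := by
      have : ω ∈ ⋃ j, B j := hcoverB ▸ Set.mem_univ ω
      obtain ⟨j, hj⟩ := Set.mem_iUnion.mp this
      exact ⟨j, hj⟩
    constructor
    · rintro rfl
      refine ⟨Nat.sInf_mem hne, ?_⟩
      intro hmem
      obtain ⟨j', hj'⟩ := Set.mem_iUnion.mp hmem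
      obtain ⟨hlt, hj'B⟩ := Set.mem_iUnion.mp hj'
      exact Nat.notMem_of_lt_sInf hlt hj'B
    · rintro ⟨hBn, hnot⟩
      refine le_antisymm (Nat.sInf_le hBn) ?_
      by_contra hcon
      push_neg at hcon
      exact hnot (Set.mem_iUnion.mpr ⟨g ω, Set.mem_iUnion.mpr ⟨hcon, Nat.sInf_mem hne⟩⟩)
  have hgmeas : Measurable g := by
    refine measurable_to_countable' fun n => ?_
    have : g ⁻¹' {n} = C n := by
      ext ω; simpa using hgC ω n
    rw [this]; exact hCmeas n
  refine ⟨g, hgmeas, ?_⟩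
  have hbad : μ (⋃ j, B j \ C j) = 0 := measure_iUnion_null hnull
  rw [Filter.EventuallyEq, ae_iff]
  refine measure_mono_null ?_ hbad
  intro ω hω
  have hωA : ω ∈ A (f ω) := rfl
  have hωB : ω ∈ B (f ω) := hAB _ hωA
  have hωC : ω ∉ C (f ω) := fun hc => hω ((hgC ω (f ω)).mpr hc).symm
  exact Set.mem_iUnion.mpr ⟨f ω, hωB, hωC⟩

lemma iIndepFun_congr_ae {Ω ι : Type*} [MeasurableSpace Ω] {μ : Measure Ω}
    {f g : ι → Ω → ℕ} (hf : iIndepFun f μ)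
    (h : ∀ i, f i =ᵐ[μ] g i) : iIndepFun g μ := by
  rw [iIndepFun_iff_measure_inter_preimage_eq_mul] at hf ⊢
  intro S sets hmeas
  have h1 : ∀ i ∈ S, μ (g i ⁻¹' sets i) = μ (f i ⁻¹' sets i) := by
    intro i _
    apply measure_congr
    filter_upwards [h i] with ω hω
    show (g i ω ∈ sets i) = (f i ω ∈ sets i)
    rw [hω]
  have h2 : μ (⋂ i ∈ S, g i ⁻¹' sets i) = μ (⋂ i ∈ S, f i ⁻¹' sets i) := by
    apply measure_congr
    have hS : ∀ᵐ ω ∂μ, ∀ i ∈ S, f i ω = g i ω :=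
      (eventually_all_finset S).mpr fun i _ => h i
    filter_upwards [hS] with ω hω
    show (ω ∈ ⋂ i ∈ S, g i ⁻¹' sets i) = (ω ∈ ⋂ i ∈ S, f i ⁻¹' sets i)
    simp only [Set.mem_iInter, Set.mem_preimage, eq_iff_iff]
    exact ⟨fun h' i hi => (hω i hi) ▸ h' i hi, fun h' i hi => (hω i hi) ▸ h' i hi⟩
  rw [h2, hf S hmeas]
  exact Finset.prod_congr rfl fun i hi => (h1 i hi).symm

lemma iIndepFun_update_const {Ω ι : Type*} [MeasurableSpace Ω] {μ : Measure Ω}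
    {f g : ι → Ω → ℕ} {P : ι → Prop} [DecidablePred P]
    (hf : iIndepFun f μ)
    (hgf : ∀ i, P i → g i = f i) (hconst : ∀ i, ¬ P i → ∃ c, g i = fun _ => c) :
    iIndepFun g μ := by
  classical
  have hμprob : IsProbabilityMeasure μ := hf.isProbabilityMeasure
  rw [iIndepFun_iff_measure_inter_preimage_eq_mul] at hf ⊢
  intro S sets hmeas
  by_cases hbad : ∀ i ∈ S, ¬ P i → g i ⁻¹' sets i = Set.univ
  · have key : (⋂ i ∈ S, g i ⁻¹' sets i) = ⋂ i ∈ S.filter P, f i ⁻¹' sets i := by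
      ext ω
      simp only [Set.mem_iInter, Finset.mem_filter]
      constructor
      · rintro h' i ⟨hi, hPi⟩
        have := h' i hi
        rwa [hgf i hPi] at this
      · intro h' i hi
        by_cases hPi : P i
        · rw [hgf i hPi]; exact h' i ⟨hi, hPi⟩
        · rw [hbad i hi hPi]; trivial
    rw [key, hf (S.filter P) (fun i hi => hmeas i (Finset.mem_filter.mp hi).1)]
    rw [← Finset.prod_filter_mul_prod_filter_not S P]
    have hone : ∀ i ∈ S.filter (fun i => ¬ P i), μ (g i ⁻¹' sets i) = 1 := by
      intro i hi
      obtain ⟨hiS, hPi⟩ := Finset.mem_filter.mp hi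
      rw [hbad i hiS hPi, measure_univ]
    rw [Finset.prod_congr rfl hone, Finset.prod_const_one, mul_one]
    exact Finset.prod_congr rfl fun i hi => by rw [hgf i (Finset.mem_filter.mp hi).2]
  · push_neg at hbad
    obtain ⟨i0, hi0S, hP0, hne⟩ := hbad
    obtain ⟨c, hc⟩ := hconst i0 hP0
    have hempty : g i0 ⁻¹' sets i0 = ∅ := by
      by_cases hcmem : c ∈ sets i0
      · exact absurd (by rw [hc]; ext ω; simpa using hcmem) hne
      · rw [hc]; ext ω; simpa using hcmem
    have hL : (⋂ i ∈ S, g i ⁻¹' sets i) = ∅ := by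
      refine Set.eq_empty_of_subset_empty ?_
      rw [← hempty]
      exact Set.biInter_subset_of_mem hi0S
    rw [hL, measure_empty]
    rw [eq_comm, Finset.prod_eq_zero hi0S (by rw [hempty, measure_empty])]

lemma lintegral_finset_prod_of_iIndepFun {Ω ι : Type*} [MeasurableSpace Ω] {μ : Measure Ω}
    [IsProbabilityMeasure μ] (f : ι → Ω → ℝ≥0∞)
    (hmeas : ∀ i, Measurable (f i))
    (hind : iIndepFun f μ) (s : Finset ι) :
    ∫⁻ ω, ∏ i ∈ s, f i ω ∂μ = ∏ i ∈ s, ∫⁻ ω, f i ω ∂μ := by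
  classical
  induction s using Finset.induction_on with
  | empty => simp
  | insert _ _ ha ih =>
    rename_i a s
    rw [Finset.prod_insert ha]
    have hprodmeas : Measurable (fun ω => ∏ i ∈ s, f i ω) :=
      Finset.measurable_prod _ fun i _ => hmeas i
    have hindep2 : IndepFun (f a) (fun ω => ∏ i ∈ s, f i ω) μ := by
      have h1 := hind.indepFun_finset_prod_of_notMem hmeas ha
      have heq : (∏ j ∈ s, f j) = fun ω => ∏ i ∈ s, f i ω := by
        funext ω; simp [Finset.prod_apply]
      rw [heq] at h1
      exact h1.symm
    calc ∫⁻ ω, ∏ i ∈ insert a s, f i ω ∂μ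
        = ∫⁻ ω, f a ω * ∏ i ∈ s, f i ω ∂μ := by
          apply lintegral_congr fun ω => by rw [Finset.prod_insert ha]
      _ = (∫⁻ ω, f a ω ∂μ) * ∫⁻ ω, ∏ i ∈ s, f i ω ∂μ :=
          lintegral_mul_eq_lintegral_mul_lintegral_of_indepFun (hmeas a) hprodmeas hindep2
      _ = _ := by rw [ih]

/-- Joint probability generating function of the two components of a split generalized
Skellam process: each jump of size `i` is split into `sgn(i)·Y` and `sgn(i)·(|i|−Y)`,
where `Y` has conditional law `q(·; i)` on `{0, …, |i|}`.  Then
`G(u,v) = exp(−∑_{i∈I} Λᵢ (1 − E[u^{sgn(X)Y} v^{X−sgn(X)Y} | X = i]))`. -/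
theorem split_skellam_joint_pgf
    {Ω : Type*} [MeasurableSpace Ω] (μ : Measure Ω) [IsProbabilityMeasure μ]
    (I : Finset ℤ) (hI : (0:ℤ) ∉ I)
    (Λ : ℤ → ℝ≥0) (N : ℤ → Ω → ℕ) (Y : ℤ → ℕ → Ω → ℕ) (q : ℤ → ℕ → ℝ)
    (hq_nonneg : ∀ i ∈ I, ∀ j, 0 ≤ q i j)
    (hq_supp : ∀ i ∈ I, ∀ j, i.natAbs < j → q i j = 0)
    (hq_sum : ∀ i ∈ I, ∑ j ∈ Finset.range (i.natAbs + 1), q i j = 1)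
    (hlawN : ∀ i ∈ I, μ.map (N i) = poissonMeasure (Λ i))
    (hlawY : ∀ i ∈ I, ∀ k j, μ {ω | Y i k ω = j} = ENNReal.ofReal (q i j))
    (hindep : iIndepFun
      (fun (x : ℤ ⊕ ℤ × ℕ) ω => Sum.elim (fun i => N i ω) (fun ik => Y ik.1 ik.2 ω) x) μ)
    (S₁ S₂ : Ω → ℤ)
    (hS₁ : ∀ ω, S₁ ω = ∑ i ∈ I, i.sign * ∑ k ∈ Finset.range (N i ω), (Y i k ω : ℤ))
    (hS₂ : ∀ ω, S₂ ω = ∑ i ∈ I,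
      i.sign * ∑ k ∈ Finset.range (N i ω), ((i.natAbs : ℤ) - (Y i k ω : ℤ)))
    (u v : ℝ) (hu : 0 < u) (hv : 0 < v) :
    ∫ ω, u ^ (S₁ ω) * v ^ (S₂ ω) ∂μ
      = Real.exp (-∑ i ∈ I, (Λ i : ℝ) *
          (1 - ∑ j ∈ Finset.range (i.natAbs + 1),
            q i j * u ^ (i.sign * (j : ℤ)) * v ^ (i - i.sign * (j : ℤ)))) := by
  classical
  -- measurable modifications
  have hNae : ∀ i ∈ I, AEMeasurable (N i) μ := by
    intro i hi
    by_contra hcon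
    have h0 := hlawN i hi
    rw [Measure.map_of_not_aemeasurable hcon] at h0
    have := congrArg (fun m : Measure ℕ => m Set.univ) h0
    simp at this
  have hYae : ∀ i ∈ I, ∀ k, AEMeasurable (Y i k) μ := by
    intro i hi k
    apply aemeasurable_of_tsum_fiber_eq_one
    have hzero : ∀ j ∉ Finset.range (i.natAbs + 1), μ {ω | Y i k ω = j} = 0 := by
      intro j hj
      rw [hlawY i hi k j, hq_supp i hi j (by simpa using hj), ENNReal.ofReal_zero]
    rw [tsum_eq_sum hzero]
    have : ∀ j ∈ Finset.range (i.natAbs + 1), μ {ω | Y i k ω = j} = ENNReal.ofReal (q i j) :=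
      fun j _ => hlawY i hi k j
    rw [Finset.sum_congr rfl this, ← ENNReal.ofReal_sum_of_nonneg (fun j _ => hq_nonneg i hi j),
      hq_sum i hi, ENNReal.ofReal_one]
  set N' : ℤ → Ω → ℕ := fun i => if h : i ∈ I then (hNae i h).mk _ else fun _ => 0 with hN'def
  set Y' : ℤ → ℕ → Ω → ℕ :=
    fun i k => if h : i ∈ I then (hYae i h k).mk _ else fun _ => 0 with hY'def
  have hN'meas : ∀ i, Measurable (N' i) := by
    intro i
    by_cases h : i ∈ I
    · simp only [hN'def, dif_pos h]; exact (hNae i h).measurable_mk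
    · simp only [hN'def, dif_neg h]; exact measurable_const
  have hY'meas : ∀ i k, Measurable (Y' i k) := by
    intro i k
    by_cases h : i ∈ I
    · simp only [hY'def, dif_pos h]; exact (hYae i h k).measurable_mk
    · simp only [hY'def, dif_neg h]; exact measurable_const
  have hN'ae : ∀ i ∈ I, N i =ᵐ[μ] N' i := by
    intro i h
    simp only [hN'def, dif_pos h]; exact (hNae i h).ae_eq_mk
  have hY'ae : ∀ i ∈ I, ∀ k, Y i k =ᵐ[μ] Y' i k := by
    intro i h k
    simp only [hY'def, dif_pos h]; exact (hYae i h k).ae_eq_mk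
  -- independence of the modified family
  set F' : (ℤ ⊕ ℤ × ℕ) → Ω → ℕ :=
    fun x ω => Sum.elim (fun i => N' i ω) (fun ik => Y' ik.1 ik.2 ω) x with hF'def
  have hF'meas : ∀ x, Measurable (F' x) := by
    rintro (i | ⟨i, k⟩)
    exacts [hN'meas i, hY'meas i k]
  have hindep' : iIndepFun F' μ := by
    set P : (ℤ ⊕ ℤ × ℕ) → Prop := fun x => Sum.elim (· ∈ I) (fun p => p.1 ∈ I) x with hP
    set F'' : (ℤ ⊕ ℤ × ℕ) → Ω → ℕ := fun x => Sum.elim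
      (fun i => if i ∈ I then N' i else N i)
      (fun ik => if ik.1 ∈ I then Y' ik.1 ik.2 else Y ik.1 ik.2) x with hF''def
    have h1 : iIndepFun F'' μ := by
      apply iIndepFun_congr_ae hindep
      rintro (i | ⟨i, k⟩)
      · by_cases h : i ∈ I
        · simp only [hF''def, Sum.elim_inl, if_pos h]; exact hN'ae i h
        · simp only [hF''def, Sum.elim_inl, if_neg h]; rfl
      · by_cases h : i ∈ I
        · simp only [hF''def, Sum.elim_inr, if_pos h]; exact hY'ae i h k
        · simp only [hF''def, Sum.elim_inr, if_neg h]; rfl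
    apply iIndepFun_update_const (P := P) h1
    · rintro (i | ⟨i, k⟩) h
      · simp only [hP, Sum.elim_inl] at h
        funext ω
        simp only [hF'def, hF''def, Sum.elim_inl, if_pos h]
      · simp only [hP, Sum.elim_inr] at h
        funext ω
        simp only [hF'def, hF''def, Sum.elim_inr, if_pos h]
    · rintro (i | ⟨i, k⟩) h
      · simp only [hP, Sum.elim_inl] at h
        refine ⟨0, ?_⟩
        funext ω
        simp only [hF'def, Sum.elim_inl, hN'def, dif_neg h]
      · simp only [hP, Sum.elim_inr] at h
        refine ⟨0, ?_⟩
        funext ω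
        simp only [hF'def, Sum.elim_inr, hY'def, dif_neg h]
  -- transported laws
  have hlawN' : ∀ i ∈ I, μ.map (N' i) = poissonMeasure (Λ i) := by
    intro i hi
    rw [← Measure.map_congr (hN'ae i hi)]
    exact hlawN i hi
  have hlawY' : ∀ i ∈ I, ∀ k j, μ {ω | Y' i k ω = j} = ENNReal.ofReal (q i j) := by
    intro i hi k j
    rw [← hlawY i hi k j]
    apply measure_congr
    filter_upwards [hY'ae i hi k] with ω hω
    show (Y' i k ω = j) = (Y i k ω = j)
    rw [hω]
  -- factor functions
  set c : ℤ → ℕ → ℝ := fun i j => u ^ (i.sign * (j:ℤ)) * v ^ (i - i.sign * (j:ℤ)) with hcdef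
  have hcpos : ∀ i j, 0 < c i j := fun i j => mul_pos (zpow_pos hu _) (zpow_pos hv _)
  set C : ℤ → ℕ → ℝ≥0∞ := fun i j => ENNReal.ofReal (c i j) with hCdef
  set G : ℤ → Ω → ℝ≥0∞ := fun i ω => ∏ k ∈ Finset.range (N' i ω), C i (Y' i k ω) with hGdef
  have hGm : ∀ (m0 : MeasurableSpace Ω) i, Measurable[m0] (N' i) →
      (∀ k, Measurable[m0] (Y' i k)) → Measurable[m0] (G i) := by
    intro m0 i hN hY
    exact measurable_comp_nat (N' i) (fun n ω => ∏ k ∈ Finset.range n, C i (Y' i k ω)) hN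
      (fun n => Finset.measurable_prod _ fun k _ => (measurable_from_nat (f := C i)).comp (hY k))
  have hGmeas : ∀ i, Measurable (G i) := fun i => hGm _ i (hN'meas i) (fun k => hY'meas i k)
  -- block σ-algebras
  set blk : ℤ → Set (ℤ ⊕ ℤ × ℕ) := fun i => {x | Sum.elim (fun j => j = i) (fun p => p.1 = i) x}
    with hblkdef
  set 𝓑 : ℤ → MeasurableSpace Ω :=
    fun i => ⨆ x ∈ blk i, MeasurableSpace.comap (F' x) inferInstance with h𝓑def
  have hcomap_le_𝓑 : ∀ i x, x ∈ blk i → MeasurableSpace.comap (F' x) inferInstance ≤ 𝓑 i :=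
    fun i x hx => le_biSup (f := fun x => MeasurableSpace.comap (F' x) inferInstance) hx
  have hN'm𝓑 : ∀ i, Measurable[𝓑 i] (N' i) := fun i =>
    Measurable.of_comap_le (hcomap_le_𝓑 i (Sum.inl i) rfl)
  have hY'm𝓑 : ∀ i k, Measurable[𝓑 i] (Y' i k) := fun i k =>
    Measurable.of_comap_le (hcomap_le_𝓑 i (Sum.inr (i, k)) rfl)
  have hGmeas𝓑 : ∀ i, Measurable[𝓑 i] (G i) := fun i => hGm (𝓑 i) i (hN'm𝓑 i) (hY'm𝓑 i)
  -- Step 1: factorization of the lintegral over I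
  have step1 : ∀ s : Finset ℤ, ∫⁻ ω, ∏ i ∈ s, G i ω ∂μ = ∏ i ∈ s, ∫⁻ ω, G i ω ∂μ := by
    intro s
    induction s using Finset.induction_on with
    | empty => simp
    | insert _ _ ha ih =>
      rename_i a s'
      have hdisj : Disjoint (blk a) (⋃ i ∈ s', blk i) := by
        rw [Set.disjoint_left]
        rintro (j | ⟨j, k⟩) hx hx'
        · obtain ⟨i, hi, hxi⟩ := Set.mem_iUnion₂.mp hx'
          simp only [hblkdef, Set.mem_setOf_eq, Sum.elim_inl] at hx hxi
          exact ha (by rwa [← hxi, hx] at hi)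
        · obtain ⟨i, hi, hxi⟩ := Set.mem_iUnion₂.mp hx'
          simp only [hblkdef, Set.mem_setOf_eq, Sum.elim_inr] at hx hxi
          exact ha (by rwa [← hxi, hx] at hi)
      have hIndep0 := indep_iSup_of_disjoint
        (m := fun x => MeasurableSpace.comap (F' x) inferInstance)
        (fun x => (hF'meas x).comap_le) hindep'.iIndep hdisj
      have h𝓑le' : ∀ i ∈ s', 𝓑 i ≤
          ⨆ x ∈ (⋃ i ∈ s', blk i), MeasurableSpace.comap (F' x) inferInstance := by
        intro i hi
        refine iSup_le fun x => iSup_le fun hx =>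
          le_biSup (f := fun x => MeasurableSpace.comap (F' x) inferInstance) ?_
        exact Set.mem_biUnion hi hx
      have hprodmeas' : Measurable[⨆ x ∈ (⋃ i ∈ s', blk i),
          MeasurableSpace.comap (F' x) inferInstance] (fun ω => ∏ i ∈ s', G i ω) :=
        Finset.measurable_prod _ fun i hi => Measurable.le (h𝓑le' i hi) (hGmeas𝓑 i)
      have hIndepFun : IndepFun (G a) (fun ω => ∏ i ∈ s', G i ω) μ :=
        indep_of_indep_of_le_right
          (indep_of_indep_of_le_left hIndep0 (Measurable.comap_le (hGmeas𝓑 a)))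
          (Measurable.comap_le hprodmeas')
      calc ∫⁻ ω, ∏ i ∈ insert a s', G i ω ∂μ
          = ∫⁻ ω, G a ω * ∏ i ∈ s', G i ω ∂μ :=
            lintegral_congr fun ω => by rw [Finset.prod_insert ha]
        _ = (∫⁻ ω, G a ω ∂μ) * ∫⁻ ω, ∏ i ∈ s', G i ω ∂μ :=
            lintegral_mul_eq_lintegral_mul_lintegral_of_indepFun (hGmeas a)
              (Finset.measurable_prod _ fun i _ => hGmeas i) hIndepFun
        _ = _ := by rw [ih, Finset.prod_insert ha]
  -- the mean of one splitting factor
  set mR : ℤ → ℝ := fun i => ∑ j ∈ Finset.range (i.natAbs + 1),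
    q i j * u ^ (i.sign * (j:ℤ)) * v ^ (i - i.sign * (j:ℤ)) with hmRdef
  have hmR_eq : ∀ i, mR i = ∑ j ∈ Finset.range (i.natAbs + 1), q i j * c i j := by
    intro i
    refine Finset.sum_congr rfl fun j _ => ?_
    simp only [hcdef]; ring
  have hmR_nonneg : ∀ i ∈ I, 0 ≤ mR i := fun i hi => by
    rw [hmR_eq]
    exact Finset.sum_nonneg fun j _ => mul_nonneg (hq_nonneg i hi j) (hcpos i j).le
  -- integral of a single Y-factor
  have hYint : ∀ i ∈ I, ∀ k, ∫⁻ ω, C i (Y' i k ω) ∂μ = ENNReal.ofReal (mR i) := by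
    intro i hi k
    have hrep : (fun ω => C i (Y' i k ω))
        = fun ω => ∑' j, Set.indicator (Y' i k ⁻¹' {j}) (fun _ => C i j) ω :=
      comp_nat_eq_tsum_indicator (Y' i k) (fun j _ => C i j)
    rw [show ∫⁻ ω, C i (Y' i k ω) ∂μ
        = ∫⁻ ω, ∑' j, Set.indicator (Y' i k ⁻¹' {j}) (fun _ => C i j) ω ∂μ from
      lintegral_congr fun ω => congrFun hrep ω]
    rw [lintegral_tsum (fun j => ((measurable_const).indicator
      ((hY'meas i k) (measurableSet_singleton j))).aemeasurable)]
    have hterm : ∀ j, ∫⁻ ω, Set.indicator (Y' i k ⁻¹' {j}) (fun _ => C i j) ω ∂μ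
        = C i j * ENNReal.ofReal (q i j) := by
      intro j
      rw [lintegral_indicator ((hY'meas i k) (measurableSet_singleton j)), setLIntegral_const]
      congr 1
      rw [← hlawY' i hi k j]
      rfl
    rw [tsum_congr hterm]
    rw [tsum_eq_sum (s := Finset.range (i.natAbs + 1)) (fun j hj => by
      rw [hq_supp i hi j (by simpa using hj), ENNReal.ofReal_zero, mul_zero])]
    rw [hmR_eq, ENNReal.ofReal_sum_of_nonneg
      (fun j _ => mul_nonneg (hq_nonneg i hi j) (hcpos i j).le)]
    refine Finset.sum_congr rfl fun j _ => ?_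
    simp only [hCdef]
    rw [← ENNReal.ofReal_mul (hcpos i j).le, mul_comm (c i j) (q i j)]
  -- law of N'
  have hNint : ∀ i ∈ I, ∀ n, μ {ω | N' i ω = n} = ENNReal.ofReal (poissonPMFReal (Λ i) n) := by
    intro i hi n
    have h1 : {ω | N' i ω = n} = N' i ⁻¹' {n} := rfl
    rw [h1, ← Measure.map_apply (hN'meas i) (measurableSet_singleton n), hlawN' i hi]
    rw [poissonMeasure_singleton]
    rfl
  -- integral of one block factor
  have hint_i : ∀ i ∈ I, ∫⁻ ω, G i ω ∂μ
      = ENNReal.ofReal (Real.exp (-((Λ i : ℝ) * (1 - mR i)))) := by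
    intro i hi
    have hGrep : (fun ω => G i ω) = fun ω => ∑' n, Set.indicator (N' i ⁻¹' {n})
        (fun ω => ∏ k ∈ Finset.range n, C i (Y' i k ω)) ω :=
      comp_nat_eq_tsum_indicator (N' i) (fun n ω => ∏ k ∈ Finset.range n, C i (Y' i k ω))
    rw [show ∫⁻ ω, G i ω ∂μ = ∫⁻ ω, ∑' n, Set.indicator (N' i ⁻¹' {n})
        (fun ω => ∏ k ∈ Finset.range n, C i (Y' i k ω)) ω ∂μ from
      lintegral_congr fun ω => congrFun hGrep ω]
    rw [lintegral_tsum (fun n => ((Finset.measurable_prod _ fun k _ =>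
      show Measurable fun ω => C i (Y' i k ω) from
        (measurable_from_nat (f := C i)).comp (hY'meas i k)).indicator
      ((hN'meas i) (measurableSet_singleton n))).aemeasurable)]
    have hterm : ∀ n, ∫⁻ ω, Set.indicator (N' i ⁻¹' {n})
        (fun ω => ∏ k ∈ Finset.range n, C i (Y' i k ω)) ω ∂μ
        = ENNReal.ofReal (poissonPMFReal (Λ i) n) * ENNReal.ofReal (mR i) ^ n := by
      intro n
      set φ : (ℤ ⊕ ℤ × ℕ) → ℕ → ℝ≥0∞ := fun x => Sum.elim
        (fun _ m => if m = n then 1 else 0) (fun ik m => C ik.1 m) x with hφdef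
      have hφmeas : ∀ x, Measurable (φ x) := fun x => measurable_from_nat
      have hH : iIndepFun
          (fun x => φ x ∘ F' x) μ := hindep'.comp φ hφmeas
      have hinj : ∀ a ∈ Finset.range n, ∀ b ∈ Finset.range n,
          Sum.inr (α := ℤ) (i, a) = Sum.inr (i, b) → a = b := by
        intro a _ b _ h; simpa using h
      have hnotmem : Sum.inl i ∉ (Finset.range n).image fun k => Sum.inr (i, k) := by simp
      have hpt : (fun ω => Set.indicator (N' i ⁻¹' {n})
          (fun ω => ∏ k ∈ Finset.range n, C i (Y' i k ω)) ω)
          = fun ω => ∏ x ∈ insert (Sum.inl i) ((Finset.range n).image fun k => Sum.inr (i, k)),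
              (φ x ∘ F' x) ω := by
        funext ω
        rw [Finset.prod_insert hnotmem, Finset.prod_image hinj]
        by_cases hn : N' i ω = n
        · rw [Set.indicator_of_mem (by simpa using hn)]
          simp only [hφdef, Function.comp_apply, hF'def, Sum.elim_inl, Sum.elim_inr, hn,
            eq_self_iff_true, if_true, one_mul]
        · rw [Set.indicator_of_notMem (by simpa using hn)]
          simp only [hφdef, Function.comp_apply, hF'def, Sum.elim_inl, Sum.elim_inr]
          rw [if_neg hn, zero_mul]
      rw [show ∫⁻ ω, Set.indicator (N' i ⁻¹' {n})
          (fun ω => ∏ k ∈ Finset.range n, C i (Y' i k ω)) ω ∂μ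
          = ∫⁻ ω, ∏ x ∈ insert (Sum.inl i) ((Finset.range n).image fun k => Sum.inr (i, k)),
              (φ x ∘ F' x) ω ∂μ from lintegral_congr fun ω => congrFun hpt ω]
      rw [lintegral_finset_prod_of_iIndepFun _ (fun x => (hφmeas x).comp (hF'meas x)) hH _]
      rw [Finset.prod_insert hnotmem, Finset.prod_image hinj]
      congr 1
      · have h2 : (φ (Sum.inl i) ∘ F' (Sum.inl i))
            = fun ω => Set.indicator (N' i ⁻¹' {n}) (fun _ => (1:ℝ≥0∞)) ω := by
          funext ω
          by_cases hn : N' i ω = n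
          · simp only [hφdef, Function.comp_apply, hF'def, Sum.elim_inl, if_pos hn]
            rw [Set.indicator_of_mem (by simpa using hn)]
          · simp only [hφdef, Function.comp_apply, hF'def, Sum.elim_inl, if_neg hn]
            rw [Set.indicator_of_notMem (by simpa using hn)]
        rw [show ∫⁻ ω, (φ (Sum.inl i) ∘ F' (Sum.inl i)) ω ∂μ
            = ∫⁻ ω, Set.indicator (N' i ⁻¹' {n}) (fun _ => (1:ℝ≥0∞)) ω ∂μ from
          lintegral_congr fun ω => congrFun h2 ω]
        rw [lintegral_indicator ((hN'meas i) (measurableSet_singleton n)), setLIntegral_const,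
          one_mul]
        exact hNint i hi n
      · rw [Finset.prod_congr rfl (fun k _ => show ∫⁻ ω, (φ (Sum.inr (i, k)) ∘ F' (Sum.inr (i, k))) ω ∂μ
            = ENNReal.ofReal (mR i) from hYint i hi k), Finset.prod_const, Finset.card_range]
    rw [tsum_congr hterm]
    have hsummable : Summable (fun n => poissonPMFReal (Λ i) n * mR i ^ n) := by
      have heq : (fun n => poissonPMFReal (Λ i) n * mR i ^ n)
          = fun n => Real.exp (-((Λ i : ℝ))) * (((Λ i : ℝ) * mR i) ^ n / (Nat.factorial n : ℝ)) := by
        funext n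
        simp only [poissonPMFReal, mul_pow]
        ring
      rw [heq]
      exact (Real.summable_pow_div_factorial _).mul_left _
    have hnonneg : ∀ n, 0 ≤ poissonPMFReal (Λ i) n * mR i ^ n :=
      fun n => mul_nonneg poissonPMFReal_nonneg (pow_nonneg (hmR_nonneg i hi) n)
    calc ∑' n, ENNReal.ofReal (poissonPMFReal (Λ i) n) * ENNReal.ofReal (mR i) ^ n
        = ∑' n, ENNReal.ofReal (poissonPMFReal (Λ i) n * mR i ^ n) := by
          refine tsum_congr fun n => ?_
          rw [← ENNReal.ofReal_pow (hmR_nonneg i hi), ← ENNReal.ofReal_mul poissonPMFReal_nonneg]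
      _ = ENNReal.ofReal (∑' n, poissonPMFReal (Λ i) n * mR i ^ n) :=
          (ENNReal.ofReal_tsum_of_nonneg hnonneg hsummable).symm
      _ = ENNReal.ofReal (Real.exp (-((Λ i : ℝ) * (1 - mR i)))) := by
          congr 1
          have h1 : ∀ n, poissonPMFReal (Λ i) n * mR i ^ n
              = Real.exp (-((Λ i : ℝ))) * (((Λ i : ℝ) * mR i) ^ n / (Nat.factorial n : ℝ)) := by
            intro n
            simp only [poissonPMFReal, mul_pow]
            ring
          rw [tsum_congr h1, tsum_mul_left]
          have h2 : ∑' n : ℕ, ((Λ i : ℝ) * mR i) ^ n / (Nat.factorial n : ℝ) = Real.exp ((Λ i : ℝ) * mR i) := by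
            rw [Real.exp_eq_exp_ℝ, NormedSpace.exp_eq_tsum_div]
          rw [h2, ← Real.exp_add]
          ring_nf
  -- a.e. identity between the integrand and the product
  have haeN : ∀ᵐ ω ∂μ, ∀ i ∈ I, N i ω = N' i ω ∧ ∀ k, Y i k ω = Y' i k ω := by
    rw [eventually_all_finset]
    intro i hi
    exact (hN'ae i hi).and (ae_all_iff.mpr fun k => hY'ae i hi k)
  have hae : (fun ω => u ^ S₁ ω * v ^ S₂ ω) =ᵐ[μ] fun ω => (∏ i ∈ I, G i ω).toReal := by
    filter_upwards [haeN] with ω hω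
    have hA : u ^ S₁ ω * v ^ S₂ ω = ∏ i ∈ I, ∏ k ∈ Finset.range (N i ω), c i (Y i k ω) := by
      rw [hS₁ ω, hS₂ ω, zpow_finset_sum' hu.ne' I _, zpow_finset_sum' hv.ne' I _,
        ← Finset.prod_mul_distrib]
      refine Finset.prod_congr rfl fun i _ => ?_
      rw [Finset.mul_sum, Finset.mul_sum, zpow_finset_sum' hu.ne' _ _, zpow_finset_sum' hv.ne' _ _,
        ← Finset.prod_mul_distrib]
      refine Finset.prod_congr rfl fun k _ => ?_
      have hsign : i.sign * ((i.natAbs : ℤ) - (Y i k ω : ℤ)) = i - i.sign * (Y i k ω : ℤ) := by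
        rw [mul_sub, Int.sign_mul_natAbs]
      rw [hsign]
    have hB : (∏ i ∈ I, G i ω).toReal
        = ∏ i ∈ I, ∏ k ∈ Finset.range (N i ω), c i (Y i k ω) := by
      rw [ENNReal.toReal_prod]
      refine Finset.prod_congr rfl fun i hi => ?_
      have hGi : G i ω = ∏ k ∈ Finset.range (N i ω), C i (Y i k ω) := by
        simp only [hGdef, ← (hω i hi).1]
        refine Finset.prod_congr rfl fun k _ => ?_
        rw [← (hω i hi).2 k]
      rw [hGi, ENNReal.toReal_prod]
      refine Finset.prod_congr rfl fun k _ => ?_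
      simp only [hCdef]
      rw [ENNReal.toReal_ofReal (hcpos i _).le]
    rw [hA, hB]
  -- final assembly
  rw [integral_congr_ae hae]
  have hprodae : AEMeasurable (fun ω => ∏ i ∈ I, G i ω) μ :=
    (Finset.measurable_prod _ fun i _ => hGmeas i).aemeasurable
  have hlt : ∀ᵐ ω ∂μ, (∏ i ∈ I, G i ω) < ⊤ := ae_of_all _ fun ω => by
    refine ENNReal.prod_lt_top fun i _ => ?_
    simp only [hGdef]
    refine ENNReal.prod_lt_top fun k _ => ?_
    simp only [hCdef]
    exact ENNReal.ofReal_lt_top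
  rw [integral_toReal hprodae hlt, step1 I, Finset.prod_congr rfl hint_i,
    ← ENNReal.ofReal_prod_of_nonneg (fun i _ => (Real.exp_pos _).le), ← Real.exp_sum,
    ENNReal.toReal_ofReal (Real.exp_pos _).le]
  congr 1
  rw [Finset.sum_neg_distrib]
end

section
/- Law of large numbers for the generalized Skellam process: let f : [0,∞) → [0,∞) be non-decreasing with f(t) → ∞, and suppose Λ_i(t)/f(t) → μ_i ≥ 0 as t → ∞ for each i ∈ I. Then S(t)/f(t) converges in probability and in L¹ to Σ_{i∈I} i μ_i as t → ∞. -/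
open MeasureTheory ProbabilityTheory Filter Finset
open scoped NNReal ENNReal Topology

lemma poisson_integral' (r : ℝ≥0) (g : ℕ → ℝ) (hg : ∀ n, 0 ≤ g n) {L : ℝ}
    (h : HasSum (fun n => poissonPMFReal r n * g n) L) :
    Integrable g (poissonMeasure r) ∧ ∫ n, g n ∂(poissonMeasure r) = L := by
  have hpmf : ∀ n, (poissonPMF r) n = ENNReal.ofReal (poissonPMFReal r n) := fun n => rfl
  have hmeas : ∀ n : ℕ, (poissonMeasure r) {n} = ENNReal.ofReal (poissonPMFReal r n) := by
    intro n
    rw [poissonMeasure_singleton]; rfl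
  have hint : Integrable g (poissonMeasure r) := by
    constructor
    · exact (measurable_from_top (f := g)).aestronglyMeasurable
    · rw [hasFiniteIntegral_iff_norm]
      calc ∫⁻ n, ENNReal.ofReal ‖g n‖ ∂(poissonMeasure r)
          = ∑' n, ENNReal.ofReal ‖g n‖ * (poissonMeasure r) {n} := lintegral_countable' _
        _ = ∑' n, ENNReal.ofReal (poissonPMFReal r n * g n) := by
            congr 1; funext n
            rw [hmeas, Real.norm_eq_abs, abs_of_nonneg (hg n),
              ← ENNReal.ofReal_mul (hg n), mul_comm]
        _ = ENNReal.ofReal L := by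
            rw [← ENNReal.ofReal_tsum_of_nonneg (fun n => mul_nonneg poissonPMFReal_nonneg (hg n))
              h.summable, h.tsum_eq]
        _ < ⊤ := ENNReal.ofReal_lt_top
  refine ⟨hint, ?_⟩
  rw [integral_poissonMeasure' hint]
  rw [← h.tsum_eq]
  congr 1

lemma poisson_hasSum_id (r : ℝ≥0) :
    HasSum (fun n => poissonPMFReal r n * n) (r : ℝ) := by
  have base : HasSum (fun n => poissonPMFReal r n) 1 := poissonPMFRealSum r
  have key : ∀ n : ℕ, poissonPMFReal r (n + 1) * ((n : ℝ) + 1) = (r : ℝ) * poissonPMFReal r n := by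
    intro n
    simp only [poissonPMFReal, Nat.factorial_succ, Nat.cast_mul, pow_succ, Nat.cast_add,
      Nat.cast_one]
    have h1 : ((n : ℝ) + 1) ≠ 0 := by positivity
    have h2 : (n.factorial : ℝ) ≠ 0 := by positivity
    field_simp
  have hshift : HasSum (fun n : ℕ => poissonPMFReal r (n + 1) * ((n : ℕ) + 1 : ℝ)) (r : ℝ) := by
    have := base.mul_left (r : ℝ)
    simpa [key] using this
  have := (hasSum_nat_add_iff (f := fun n : ℕ => poissonPMFReal r n * n) 1).mp (by
    convert hshift using 2 with n
    · rfl
    push_cast; ring)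
  simpa using this

lemma poisson_hasSum_sq (r : ℝ≥0) :
    HasSum (fun n => poissonPMFReal r n * ((n : ℝ) * ((n : ℝ) - 1))) ((r : ℝ) ^ 2) := by
  have base : HasSum (fun n => poissonPMFReal r n) 1 := poissonPMFRealSum r
  have key : ∀ n : ℕ, poissonPMFReal r (n + 2) * (((n : ℝ) + 2) * ((n : ℝ) + 1))
      = (r : ℝ) ^ 2 * poissonPMFReal r n := by
    intro n
    simp only [poissonPMFReal, Nat.factorial_succ, Nat.cast_mul, pow_succ, Nat.cast_add,
      Nat.cast_one, Nat.cast_ofNat]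
    have h1 : ((n : ℝ) + 1) ≠ 0 := by positivity
    have h2 : ((n : ℝ) + 2) ≠ 0 := by positivity
    have h3 : (n.factorial : ℝ) ≠ 0 := by positivity
    field_simp
    ring
  have hshift : HasSum (fun n : ℕ =>
      poissonPMFReal r (n + 2) * (((n : ℝ) + 2) * (((n : ℝ) + 2) - 1))) ((r : ℝ) ^ 2) := by
    have h := base.mul_left ((r : ℝ) ^ 2)
    have heq : ∀ n : ℕ, poissonPMFReal r (n + 2) * (((n : ℝ) + 2) * (((n : ℝ) + 2) - 1))
        = (r : ℝ) ^ 2 * poissonPMFReal r n := by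
      intro n
      rw [show ((n : ℝ) + 2) - 1 = (n : ℝ) + 1 by ring]
      exact key n
    simpa [heq] using h
  have := (hasSum_nat_add_iff
      (f := fun n : ℕ => poissonPMFReal r n * ((n : ℝ) * ((n : ℝ) - 1))) 2).mp (by
    convert hshift using 2 with n
    · rfl
    push_cast; ring)
  simpa [Finset.sum_range_succ] using this

lemma poisson_hasSum_sub_sq (r : ℝ≥0) (c : ℝ) :
    HasSum (fun n => poissonPMFReal r n * ((n : ℝ) - c) ^ 2)
      ((r : ℝ) + ((r : ℝ) - c) ^ 2) := by
  have h := ((poisson_hasSum_sq r).add ((poisson_hasSum_id r).mul_left (1 - 2 * c))).add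
    ((show HasSum (fun n => poissonPMFReal r n) 1 from poissonPMFRealSum r).mul_left (c ^ 2))
  have heq : (fun n : ℕ => poissonPMFReal r n * ((n : ℝ) * ((n : ℝ) - 1))
      + (1 - 2 * c) * (poissonPMFReal r n * n) + c ^ 2 * poissonPMFReal r n)
      = fun n : ℕ => poissonPMFReal r n * ((n : ℝ) - c) ^ 2 := by
    funext n; ring
  rw [heq] at h
  convert h using 1
  ring

lemma poisson_moments {Ω : Type*} [MeasurableSpace Ω] (μ : Measure Ω) [IsProbabilityMeasure μ]
    (X : Ω → ℕ) (r : ℝ≥0) (hX : μ.map X = poissonMeasure r) (g : ℕ → ℝ) (hg : ∀ n, 0 ≤ g n)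
    {L : ℝ} (h : HasSum (fun n => poissonPMFReal r n * g n) L) :
    AEMeasurable X μ ∧ Integrable (fun ω => g (X ω)) μ ∧ ∫ ω, g (X ω) ∂μ = L := by
  have hXm : AEMeasurable X μ := by
    by_contra hc
    rw [Measure.map_of_not_aemeasurable hc] at hX
    exact (IsProbabilityMeasure.ne_zero (poissonMeasure r)) hX.symm
  obtain ⟨hint, hval⟩ := poisson_integral' r g hg h
  have hgm : AEStronglyMeasurable g (μ.map X) :=
    (measurable_from_top (f := g)).aestronglyMeasurable
  refine ⟨hXm, ?_, ?_⟩
  · exact (integrable_map_measure hgm hXm).mp (by rwa [hX])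
  · rw [← hval, ← hX, integral_map hXm hgm]

lemma poisson_l1_bound {Ω : Type*} [MeasurableSpace Ω] (μ : Measure Ω) [IsProbabilityMeasure μ]
    (X : Ω → ℕ) (r : ℝ≥0) (hX : μ.map X = poissonMeasure r)
    (F c δ : ℝ) (hF : 1 ≤ F) (hδ : 0 < δ) :
    AEMeasurable (fun ω => (X ω : ℝ)) μ ∧
    Integrable (fun ω => (X ω : ℝ) / F - c) μ ∧
    ∫ ω, |(X ω : ℝ) / F - c| ∂μ
      ≤ δ / 2 + ((r : ℝ) / F ^ 2 + ((r : ℝ) / F - c) ^ 2) / (2 * δ) := by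
  have hF0 : (0 : ℝ) < F := lt_of_lt_of_le one_pos hF
  obtain ⟨hXm, hint2, hval2⟩ := poisson_moments μ X r hX (fun n => ((n : ℝ) - c * F) ^ 2)
    (fun n => sq_nonneg _) (poisson_hasSum_sub_sq r (c * F))
  have hXc : AEMeasurable (fun ω => (X ω : ℝ)) μ :=
    (measurable_from_top (f := fun n : ℕ => (n : ℝ))).comp_aemeasurable hXm
  have hmeas : AEStronglyMeasurable (fun ω => (X ω : ℝ) / F - c) μ :=
    ((hXc.div_const F).sub aemeasurable_const).aestronglyMeasurable
  set maj : Ω → ℝ := fun ω => δ / 2 + ((X ω : ℝ) - c * F) ^ 2 * (1 / (F ^ 2 * (2 * δ))) with hmaj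
  have hmaj_int : Integrable maj μ := (integrable_const _).add (hint2.mul_const _)
  have hmaj_nonneg : ∀ ω, 0 ≤ maj ω := by
    intro ω; simp only [hmaj]; positivity
  have hpt : ∀ ω, |(X ω : ℝ) / F - c| ≤ maj ω := by
    intro ω
    set x : ℝ := (X ω : ℝ)
    have h1 : |x / F - c| = |x - c * F| / F := by
      rw [show x / F - c = (x - c * F) / F by field_simp, abs_div, abs_of_pos hF0]
    set a : ℝ := |x - c * F| with ha
    have ha0 : 0 ≤ a := abs_nonneg _
    have ha2 : a ^ 2 = (x - c * F) ^ 2 := sq_abs _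
    have hid : δ / 2 + (x - c * F) ^ 2 * (1 / (F ^ 2 * (2 * δ))) - a / F
        = (a - δ * F) ^ 2 / (2 * δ * F ^ 2) := by
      rw [← ha2]
      field_simp
      ring
    have hge : 0 ≤ (a - δ * F) ^ 2 / (2 * δ * F ^ 2) := by positivity
    rw [h1]
    simp only [hmaj]
    linarith [hid ▸ hge]
  have habs_int : Integrable (fun ω => |(X ω : ℝ) / F - c|) μ := by
    refine hmaj_int.mono (by simpa [Real.norm_eq_abs] using hmeas.norm)
      (ae_of_all _ fun ω => ?_)
    rw [Real.norm_eq_abs, Real.norm_eq_abs, abs_abs, abs_of_nonneg (hmaj_nonneg ω)]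
    exact hpt ω
  have hint_sub : Integrable (fun ω => (X ω : ℝ) / F - c) μ := by
    refine hmaj_int.mono hmeas (ae_of_all _ fun ω => ?_)
    rw [Real.norm_eq_abs, Real.norm_eq_abs, abs_of_nonneg (hmaj_nonneg ω)]
    exact hpt ω
  refine ⟨hXc, hint_sub, ?_⟩
  calc ∫ ω, |(X ω : ℝ) / F - c| ∂μ ≤ ∫ ω, maj ω ∂μ :=
        integral_mono habs_int hmaj_int hpt
    _ = δ / 2 + ((r : ℝ) + ((r : ℝ) - c * F) ^ 2) * (1 / (F ^ 2 * (2 * δ))) := by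
        simp only [hmaj]
        rw [integral_add (integrable_const _) (hint2.mul_const _), integral_const,
          integral_mul_const, hval2]
        simp
    _ = δ / 2 + ((r : ℝ) / F ^ 2 + ((r : ℝ) / F - c) ^ 2) / (2 * δ) := by
        congr 1
        field_simp

/-- Law of large numbers for the generalized Skellam process: if `f` is nondecreasing,
`f(t) → ∞` and `Λᵢ(t)/f(t) → μᵢ ≥ 0` for each `i ∈ I`, then `S(t)/f(t)` converges in
probability and in `L¹` to `∑_{i∈I} i μᵢ` as `t → ∞`. -/
theorem generalized_skellam_lln
    {Ω : Type*} [MeasurableSpace Ω] (μ : Measure Ω) [IsProbabilityMeasure μ]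
    (I : Finset ℝ) (hI : ∀ i ∈ I, i ≠ 0)
    (Λ : ℝ → ℝ → ℝ≥0) (N : ℝ → Ω → ℝ → ℕ)
    (hlaw : ∀ i ∈ I, ∀ t : ℝ, 0 ≤ t →
      μ.map (fun ω => N i ω t) = poissonMeasure (Λ i t))
    (hindep : ∀ t : ℝ, 0 ≤ t →
      iIndepFun (fun i ω => N i ω t) μ)
    (S : Ω → ℝ → ℝ) (hS : ∀ ω t, S ω t = ∑ i ∈ I, i * (N i ω t : ℝ))
    (f : ℝ → ℝ) (hf_nonneg : ∀ t, 0 ≤ f t) (hf_mono : MonotoneOn f (Set.Ici 0))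
    (hf_top : Tendsto f atTop atTop)
    (m : ℝ → ℝ) (hm : ∀ i ∈ I, 0 ≤ m i)
    (hconv : ∀ i ∈ I, Tendsto (fun t => (Λ i t : ℝ) / f t) atTop (𝓝 (m i))) :
    TendstoInMeasure μ (fun t ω => S ω t / f t) atTop
        (fun _ => ∑ i ∈ I, i * m i) ∧
      Tendsto (fun t => ∫ ω, |S ω t / f t - ∑ i ∈ I, i * m i| ∂μ) atTop (𝓝 0) := by
  classical
  set c : ℝ := ∑ i ∈ I, i * m i with hc
  have hgood : ∀ᶠ t in atTop, 0 ≤ t ∧ 1 ≤ f t :=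
    (eventually_ge_atTop 0).and (hf_top.eventually_ge_atTop 1)
  -- the "variance" bound tends to zero
  have hV : ∀ i ∈ I, Tendsto
      (fun t => (Λ i t : ℝ) / (f t) ^ 2 + ((Λ i t : ℝ) / f t - m i) ^ 2) atTop (𝓝 0) := by
    intro i hi
    have h1 : Tendsto (fun t => (Λ i t : ℝ) / f t * (f t)⁻¹) atTop (𝓝 (m i * 0)) :=
      (hconv i hi).mul hf_top.inv_tendsto_atTop
    have h2 : Tendsto (fun t => ((Λ i t : ℝ) / f t - m i) ^ 2) atTop (𝓝 ((m i - m i) ^ 2)) :=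
      ((hconv i hi).sub_const (m i)).pow 2
    have h := h1.add h2
    rw [show m i * 0 + (m i - m i) ^ 2 = 0 by ring] at h
    refine h.congr fun t => by ring
  -- per-i L¹ convergence
  have hei : ∀ i ∈ I,
      Tendsto (fun t => ∫ ω, |(N i ω t : ℝ) / f t - m i| ∂μ) atTop (𝓝 0) := by
    intro i hi
    rw [Metric.tendsto_nhds]
    intro ε hε
    have hV2 : ∀ᶠ t in atTop,
        (Λ i t : ℝ) / (f t) ^ 2 + ((Λ i t : ℝ) / f t - m i) ^ 2 < ε ^ 2 / 2 :=
      (hV i hi).eventually_lt_const (by positivity)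
    filter_upwards [hgood, hV2] with t ht hVt
    obtain ⟨ht0, htf⟩ := ht
    obtain ⟨-, -, hb⟩ := poisson_l1_bound μ (fun ω => N i ω t) (Λ i t)
      (hlaw i hi t ht0) (f t) (m i) (ε / 2) htf (by positivity)
    rw [Real.dist_eq, sub_zero, abs_of_nonneg (integral_nonneg fun ω => abs_nonneg _)]
    have h3 : ((Λ i t : ℝ) / (f t) ^ 2 + ((Λ i t : ℝ) / f t - m i) ^ 2) / (2 * (ε / 2))
        < ε / 2 := by
      rw [show 2 * (ε / 2) = ε by ring, div_lt_iff₀ hε]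
      nlinarith
    calc ∫ ω, |(N i ω t : ℝ) / f t - m i| ∂μ
        ≤ ε / 2 / 2 + ((Λ i t : ℝ) / (f t) ^ 2 + ((Λ i t : ℝ) / f t - m i) ^ 2)
            / (2 * (ε / 2)) := hb
      _ < ε := by linarith
  -- main pointwise decomposition and bounds for good t
  have hmain : ∀ t : ℝ, 0 ≤ t → 1 ≤ f t →
      AEStronglyMeasurable (fun ω => S ω t / f t) μ ∧
      Integrable (fun ω => S ω t / f t - c) μ ∧
      ∫ ω, |S ω t / f t - c| ∂μ
        ≤ ∑ i ∈ I, |i| * ∫ ω, |(N i ω t : ℝ) / f t - m i| ∂μ := by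
    intro t ht0 htf
    have hdata : ∀ i ∈ I, Integrable (fun ω => (N i ω t : ℝ) / f t - m i) μ := fun i hi =>
      (poisson_l1_bound μ (fun ω => N i ω t) (Λ i t) (hlaw i hi t ht0) (f t) (m i) 1
        htf one_pos).2.1
    have hrepr : ∀ ω, S ω t / f t - c = ∑ i ∈ I, i * ((N i ω t : ℝ) / f t - m i) := by
      intro ω
      rw [hS, hc, Finset.sum_div, ← Finset.sum_sub_distrib]
      exact Finset.sum_congr rfl fun i _ => by rw [mul_sub, mul_div_assoc]
    have hint_i : ∀ i ∈ I, Integrable (fun ω => i * ((N i ω t : ℝ) / f t - m i)) μ :=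
      fun i hi => (hdata i hi).const_mul i
    have hint_sum : Integrable (fun ω => S ω t / f t - c) μ := by
      rw [show (fun ω => S ω t / f t - c)
          = fun ω => ∑ i ∈ I, i * ((N i ω t : ℝ) / f t - m i) from funext hrepr]
      exact integrable_finset_sum I hint_i
    have hmeasS : AEStronglyMeasurable (fun ω => S ω t / f t) μ := by
      have heq : (fun ω => S ω t / f t) = fun ω => (S ω t / f t - c) + c := by
        funext ω; ring
      rw [heq]
      exact hint_sum.1.add aestronglyMeasurable_const
    refine ⟨hmeasS, hint_sum, ?_⟩
    have habs_i : ∀ i ∈ I, Integrable (fun ω => |i| * |(N i ω t : ℝ) / f t - m i|) μ :=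
      fun i hi => ((hdata i hi).abs).const_mul |i|
    calc ∫ ω, |S ω t / f t - c| ∂μ
        ≤ ∫ ω, ∑ i ∈ I, |i| * |(N i ω t : ℝ) / f t - m i| ∂μ := by
          refine integral_mono hint_sum.abs (integrable_finset_sum I habs_i) fun ω => ?_
          rw [hrepr ω]
          refine (Finset.abs_sum_le_sum_abs _ _).trans (le_of_eq ?_)
          exact Finset.sum_congr rfl fun i _ => abs_mul _ _
      _ = ∑ i ∈ I, |i| * ∫ ω, |(N i ω t : ℝ) / f t - m i| ∂μ := by
          rw [integral_finset_sum I habs_i]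
          exact Finset.sum_congr rfl fun i hi => integral_const_mul _ _
  -- the L¹ convergence
  have hsum0 : Tendsto (fun t => ∑ i ∈ I, |i| * ∫ ω, |(N i ω t : ℝ) / f t - m i| ∂μ)
      atTop (𝓝 0) := by
    have := tendsto_finset_sum I (fun i hi => ((hei i hi).const_mul |i|))
    simpa using this
  have hL1 : Tendsto (fun t => ∫ ω, |S ω t / f t - c| ∂μ) atTop (𝓝 0) := by
    refine squeeze_zero'
      (Eventually.of_forall fun t => integral_nonneg fun ω => abs_nonneg _) ?_ hsum0
    filter_upwards [hgood] with t ht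
    exact (hmain t ht.1 ht.2).2.2
  refine ⟨?_, hL1⟩
  -- convergence in measure via eLpNorm
  set G : ℝ → Ω → ℝ := fun t ω => if 0 ≤ t ∧ 1 ≤ f t then S ω t / f t else c with hG
  have hGmeas : ∀ t, AEStronglyMeasurable (G t) μ := by
    intro t
    by_cases h : 0 ≤ t ∧ 1 ≤ f t
    · have hGt : G t = fun ω => S ω t / f t := by funext ω; simp [hG, h]
      rw [hGt]
      exact (hmain t h.1 h.2).1
    · have hGt : G t = fun _ => c := by funext ω; simp [hG, h]
      rw [hGt]
      exact aestronglyMeasurable_const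
  have hGsnorm : Tendsto (fun t => eLpNorm (G t - fun _ => c) 1 μ) atTop (𝓝 0) := by
    have hto : Tendsto (fun t => ENNReal.ofReal (∫ ω, |S ω t / f t - c| ∂μ)) atTop (𝓝 0) := by
      have := ENNReal.tendsto_ofReal hL1
      simpa using this
    refine Tendsto.congr' ?_ hto
    filter_upwards [hgood] with t ht
    have hint := (hmain t ht.1 ht.2).2.1
    have hGt : (G t - fun _ => c) = fun ω => S ω t / f t - c := by
      funext ω; simp [hG, ht.1, ht.2]
    rw [hGt, eLpNorm_one_eq_lintegral_enorm, ← ofReal_integral_norm_eq_lintegral_enorm hint]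
    simp [Real.norm_eq_abs]
  have hGconv : TendstoInMeasure μ G atTop (fun _ => c) :=
    tendstoInMeasure_of_tendsto_eLpNorm one_ne_zero hGmeas aestronglyMeasurable_const hGsnorm
  intro ε hε
  refine (hGconv ε hε).congr' ?_
  filter_upwards [hgood] with t ht
  congr 1
  funext x
  simp [hG, ht.1, ht.2]
end
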